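/- Let K be a field of characteristic ≠ 3, L a cubic separable field extension of K, and B an integrally closed subring of L with fraction field L that is a free module of rank 3 over a Dedekind subring A with fraction field K. Then for any A-basis B = {1, ω₂, ω₃} of B, the dehomogenized index form I_B(X,1) is an irreducible polynomial over K, and K[X]/(I_B(X,1)) ≅ L. -/

import Mathlib

open Polynomial IntermediateField

/-- Let `A` be a Dedekind domain with fraction field `K` of characteristic `≠ 3`,
and `B` an integrally closed domain, free of rank 3 over `A`, whose fraction field
`L` is a cubic separable extension of `K`.  For an `A`-basis `{1, ω₂, ω₃}` of `B`,
the dehomogenized index form `I_B(X,1)` (the determinant of the coordinate matrix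
of `1, γ, γ²` for `γ = X ω₂ + ω₃`) is irreducible over `K` and
`K[X]/(I_B(X,1)) ≅ L`. -/
theorem indexForm_dehomogenized_irreducible_and_adjoinRoot
    (A B K L : Type*) [CommRing A] [IsDedekindDomain A]
    [CommRing B] [IsDomain B] [IsIntegrallyClosed B]
    [Field K] [Field L]
    [Algebra A B] [Algebra A K] [IsFractionRing A K]
    [Algebra B L] [IsFractionRing B L]
    [Algebra K L] [Algebra A L] [IsScalarTower A K L] [IsScalarTower A B L]
    (hchar : (3 : K) ≠ 0)
    (hdeg : Module.finrank K L = 3) [Algebra.IsSeparable K L]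
    (ω : Module.Basis (Fin 3) A B) (hω : ω 0 = 1) :
    let c : Fin 3 → Fin 3 → Fin 3 → K :=
      fun i j k => algebraMap A K (ω.repr (ω i * ω j) k)
    let M : Matrix (Fin 3) (Fin 3) (Polynomial K) :=
      !![1, 0, 0;
         0, X, 1;
         C (c 1 1 0) * X ^ 2 + 2 * C (c 1 2 0) * X + C (c 2 2 0),
         C (c 1 1 1) * X ^ 2 + 2 * C (c 1 2 1) * X + C (c 2 2 1),
         C (c 1 1 2) * X ^ 2 + 2 * C (c 1 2 2) * X + C (c 2 2 2)]
    Irreducible M.det ∧ Nonempty (AdjoinRoot M.det ≃ₐ[K] L) := by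
  intro c M
  haveI hFD : FiniteDimensional K L :=
    FiniteDimensional.of_finrank_pos (by rw [hdeg]; norm_num)
  haveI : Module.Finite A B := Module.Finite.of_basis ω
  haveI : Algebra.IsIntegral A B := Algebra.IsIntegral.of_finite A B
  haveI : IsIntegralClosure B A L := IsIntegralClosure.of_isIntegrallyClosed B A L
  haveI : IsLocalization (Algebra.algebraMapSubmonoid B (nonZeroDivisors A)) L :=
    IsIntegralClosure.isLocalization A K L B
  let E : Module.Basis (Fin 3) K L := ω.localizationLocalization K (nonZeroDivisors A) L
  set φ : K →+* L := (algebraMap K L : K →+* L) with hφ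
  have hE0 : E 0 = 1 := by
    rw [Module.Basis.localizationLocalization_apply, hω, map_one]
  -- coordinate extraction
  have hcoords : ∀ u0 u1 u2 : K, φ u0 + φ u1 * E 1 + φ u2 * E 2 = 0 →
      u0 = 0 ∧ u1 = 0 ∧ u2 = 0 := by
    intro u0 u1 u2 h
    have hli := Fintype.linearIndependent_iff.mp E.linearIndependent ![u0, u1, u2] ?_
    · exact ⟨hli 0, hli 1, hli 2⟩
    · rw [Fin.sum_univ_three]
      show u0 • E 0 + u1 • E 1 + u2 • E 2 = 0
      rw [hE0, Algebra.smul_def, Algebra.smul_def, Algebra.smul_def, mul_one]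
      exact h
  -- multiplication table
  have hprod : ∀ i j : Fin 3, E i * E j =
      φ (c i j 0) + φ (c i j 1) * E 1 + φ (c i j 2) * E 2 := by
    intro i j
    have hEi : E i = algebraMap B L (ω i) := Module.Basis.localizationLocalization_apply _ _ _ _ _
    have hEj : E j = algebraMap B L (ω j) := Module.Basis.localizationLocalization_apply _ _ _ _ _
    have hs := E.sum_repr (algebraMap B L (ω i * ω j))
    rw [Fin.sum_univ_three] at hs
    have hr : ∀ k : Fin 3, E.repr (algebraMap B L (ω i * ω j)) k = c i j k := fun k =>
      ω.localizationLocalization_repr_algebraMap K (nonZeroDivisors A) L (ω i * ω j) k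
    rw [hr 0, hr 1, hr 2, hE0] at hs
    rw [hEi, hEj, ← map_mul, ← hs, Algebra.smul_def, Algebra.smul_def, Algebra.smul_def, mul_one]
  have h11 := hprod 1 1
  have h12 := hprod 1 2
  have h22 := hprod 2 2
  -- associativity relations among structure constants
  have hkey : φ (c 1 1 1 * c 1 2 0 + c 1 1 2 * c 2 2 0 - c 1 2 1 * c 1 1 0 - c 1 2 2 * c 1 2 0)
      + φ (c 1 1 2 * c 2 2 1 - c 1 2 0 - c 1 2 1 * c 1 2 2) * E 1
      + φ (c 1 1 0 + c 1 1 1 * c 1 2 2 + c 1 1 2 * c 2 2 2 - c 1 2 1 * c 1 1 2 - c 1 2 2 ^ 2)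
        * E 2 = 0 := by
    simp only [map_add, map_sub, map_mul, map_pow]
    linear_combination (φ (c 1 2 1) - E 2) * h11 + (E 1 + φ (c 1 2 2) - φ (c 1 1 1)) * h12
      - φ (c 1 1 2) * h22
  obtain ⟨-, hA1, hA2⟩ := hcoords _ _ _ hkey
  -- quadratic elements are rational
  have hdep : ∀ γ : L, ∀ u' v' : K, γ * γ = φ u' + φ v' * γ → ∃ k : K, φ k = γ := by
    intro γ u' v' hγ
    have hint : IsIntegral K γ := IsIntegral.of_finite K γ
    have hdeg2 : (X ^ 2 - C v' * X - C u' : K[X]).natDegree = 2 := by compute_degree!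
    have hne2 : (X ^ 2 - C v' * X - C u' : K[X]) ≠ 0 := by
      intro h
      rw [h] at hdeg2
      simp at hdeg2
    have hroot2 : (aeval γ) (X ^ 2 - C v' * X - C u' : K[X]) = 0 := by
      simp only [map_sub, map_pow, map_mul, aeval_X, aeval_C, ← hφ]
      linear_combination hγ
    have hdvd := minpoly.dvd K γ hroot2
    have hd2 : (minpoly K γ).natDegree ≤ 2 := by
      have h := Polynomial.natDegree_le_of_dvd hdvd hne2
      omega
    have hfr1 : Module.finrank K K⟮γ⟯ = (minpoly K γ).natDegree :=
      IntermediateField.adjoin.finrank hint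
    have hdvd3 : Module.finrank K K⟮γ⟯ ∣ 3 := by
      rw [← hdeg]
      exact ⟨Module.finrank K⟮γ⟯ L, (Module.finrank_mul_finrank K K⟮γ⟯ L).symm⟩
    have h1 : Module.finrank K K⟮γ⟯ = 1 := by
      rcases Nat.prime_three.eq_one_or_self_of_dvd _ hdvd3 with h | h
      · exact h
      · omega
    have hbot : K⟮γ⟯ = ⊥ := IntermediateField.finrank_eq_one_iff.mp h1
    have hmem : γ ∈ (⊥ : IntermediateField K L) :=
      hbot ▸ IntermediateField.mem_adjoin_simple_self K γ
    rwa [IntermediateField.mem_bot] at hmem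
  -- leading coefficient is nonzero
  have hn : c 1 1 2 ≠ 0 := by
    intro h0
    rw [h0, map_zero, zero_mul, add_zero] at h11
    obtain ⟨k, hk⟩ := hdep (E 1) (c 1 1 0) (c 1 1 1) h11
    obtain ⟨-, h1', -⟩ := hcoords k (-1) 0 (by
      rw [map_neg φ, map_one φ, map_zero φ, zero_mul, add_zero]
      linear_combination hk)
    exact one_ne_zero (neg_eq_zero.mp h1')
  -- compute the determinant
  have hdet : M.det = C (c 1 1 2) * X ^ 3 + (2 * C (c 1 2 2) - C (c 1 1 1)) * X ^ 2
      + (C (c 2 2 2) - 2 * C (c 1 2 1)) * X - C (c 2 2 1) := by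
    rw [show M = !![1, 0, 0;
         0, X, 1;
         C (c 1 1 0) * X ^ 2 + 2 * C (c 1 2 0) * X + C (c 2 2 0),
         C (c 1 1 1) * X ^ 2 + 2 * C (c 1 2 1) * X + C (c 2 2 1),
         C (c 1 1 2) * X ^ 2 + 2 * C (c 1 2 2) * X + C (c 2 2 2)] from rfl]
    rw [Matrix.det_fin_three]
    norm_num [Matrix.cons_val_zero, Matrix.cons_val_one, Matrix.head_cons, Matrix.cons_val_two,
      Matrix.tail_cons]
    ring
  have hdeg3 : M.det.natDegree = 3 := by
    rw [hdet]
    compute_degree!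
  have hne : M.det ≠ 0 := by
    intro h
    rw [h, natDegree_zero] at hdeg3
    exact absurd hdeg3 (by norm_num)
  -- no roots in K
  have hnoroot : ∀ x : K, ¬ M.det.IsRoot x := by
    intro x hx
    have hxK := hx
    rw [IsRoot.def, hdet] at hxK
    simp only [eval_add, eval_sub, eval_mul, eval_pow, eval_C, eval_X, eval_ofNat] at hxK
    have hxL := congrArg φ hxK
    simp only [map_add, map_sub, map_mul, map_pow, map_ofNat, map_zero] at hxL
    have hγ : (φ x * E 1 + E 2) * (φ x * E 1 + E 2)
        = φ (c 1 1 0 * x ^ 2 + 2 * c 1 2 0 * x + c 2 2 0)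
          + φ (c 1 1 2 * x ^ 2 + 2 * c 1 2 2 * x + c 2 2 2) * (φ x * E 1 + E 2) := by
      simp only [map_add, map_mul, map_pow, map_ofNat]
      linear_combination (φ x) ^ 2 * h11 + (2 * φ x) * h12 + h22 - E 1 * hxL
    obtain ⟨k, hk⟩ := hdep _ _ _ hγ
    obtain ⟨-, -, h2'⟩ := hcoords k (-x) (-1) (by
      rw [map_neg φ, map_neg φ, map_one φ]
      linear_combination hk)
    exact one_ne_zero (neg_eq_zero.mp h2')
  have hirr : Irreducible M.det := by
    rw [Polynomial.irreducible_iff_roots_eq_zero_of_degree_le_three (by omega) (by omega)]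
    exact Multiset.eq_zero_of_forall_notMem fun x hx =>
      hnoroot x ((Polynomial.mem_roots').mp hx).2
  refine ⟨hirr, ?_⟩
  -- the root in L
  have hnL : φ (c 1 1 2) ≠ 0 := fun h => hn (φ.injective (h.trans (map_zero φ).symm))
  set ρ : L := (E 1 - φ (c 1 2 2)) * (φ (c 1 1 2))⁻¹ with hρdef
  have hsub : φ (c 1 1 2) * ρ = E 1 - φ (c 1 2 2) := by
    rw [hρdef]
    field_simp
  have hA1L := congrArg φ hA1
  have hA2L := congrArg φ hA2
  simp only [map_add, map_sub, map_mul, map_pow, map_zero] at hA1L hA2L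
  have hroot : aeval ρ M.det = 0 := by
    rw [hdet]
    simp only [map_add, map_sub, map_mul, map_pow, map_ofNat, aeval_X, aeval_C, ← hφ]
    apply mul_left_cancel₀ (pow_ne_zero 2 hnL)
    rw [mul_zero]
    linear_combination (E 1 - φ (c 1 2 2)) * h11 + φ (c 1 1 2) * h12
      + (E 1 - φ (c 1 2 2)) * hA2L - φ (c 1 1 2) * hA1L
      + (((φ (c 1 1 2) * ρ) ^ 2 + (φ (c 1 1 2) * ρ) * (E 1 - φ (c 1 2 2))
          + (E 1 - φ (c 1 2 2)) ^ 2)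
        + (2 * φ (c 1 2 2) - φ (c 1 1 1)) * (φ (c 1 1 2) * ρ + E 1 - φ (c 1 2 2))
        + φ (c 1 1 2) * (φ (c 2 2 2) - 2 * φ (c 1 2 1))) * hsub
  haveI hfact : Fact (Irreducible M.det) := ⟨hirr⟩
  let ψ : AdjoinRoot M.det →ₐ[K] L := AdjoinRoot.liftAlgHom _ (Algebra.ofId K L) ρ hroot
  have hinj : Function.Injective ψ := ψ.toRingHom.injective
  haveI hfin : FiniteDimensional K (AdjoinRoot M.det) := (AdjoinRoot.powerBasis hne).finite
  have hfr : Module.finrank K (AdjoinRoot M.det) = 3 := by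
    rw [(AdjoinRoot.powerBasis hne).finrank, AdjoinRoot.powerBasis_dim, hdeg3]
  have hsurj : Function.Surjective ψ := by
    have h := (LinearMap.injective_iff_surjective_of_finrank_eq_finrank
      (f := ψ.toLinearMap) (by rw [hfr, hdeg])).mp hinj
    exact h
  exact ⟨AlgEquiv.ofBijective ψ ⟨hinj, hsurj⟩⟩
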